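/- Let $R$ be a commutative ring and $A$ an associative unital $R$-algebra finitely generated as an $R$-module. Elements $a_1,\dots,a_k$ generate $A$ as an $R$-algebra if and only if for every maximal ideal $\mathfrak{m}$ of $R$ the images of $a_1,\dots,a_k$ in $A/\mathfrak{m}A$ generate $A/\mathfrak{m}A$ as an $R/\mathfrak{m}$-algebra. -/

import Mathlib

open TensorProduct

/-- Membership in an adjoin over a quotient ring equals membership over the base ring. -/
lemma adjoin_quot_eq_top_iff {R : Type*} [CommRing R] (m : Ideal R) {B : Type*} [Semiring B]
    [Algebra R B] [Algebra (R ⧸ m) B] [IsScalarTower R (R ⧸ m) B] (s : Set B) :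
    Algebra.adjoin (R ⧸ m) s = ⊤ ↔ Algebra.adjoin R s = ⊤ := by
  have key : ∀ x : B, x ∈ Algebra.adjoin (R ⧸ m) s ↔ x ∈ Algebra.adjoin R s := by
    intro x
    have hcomp : ∀ y : R, algebraMap (R ⧸ m) B (Ideal.Quotient.mk m y) = algebraMap R B y := by
      intro y
      rw [IsScalarTower.algebraMap_apply R (R ⧸ m) B, Ideal.Quotient.algebraMap_eq]
    constructor
    · intro hx
      refine Algebra.adjoin_induction (fun y hy => Algebra.subset_adjoin hy)
        (fun r => ?_) (fun u v _ _ hu hv => add_mem hu hv)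
        (fun u v _ _ hu hv => mul_mem hu hv) hx
      obtain ⟨y, rfl⟩ := Ideal.Quotient.mk_surjective r
      rw [hcomp y]
      exact Subalgebra.algebraMap_mem _ y
    · intro hx
      refine Algebra.adjoin_induction (fun y hy => Algebra.subset_adjoin hy)
        (fun r => ?_) (fun u v _ _ hu hv => add_mem hu hv)
        (fun u v _ _ hu hv => mul_mem hu hv) hx
      rw [← hcomp r]
      exact Subalgebra.algebraMap_mem _ _
  constructor <;> intro h
  · exact eq_top_iff.mpr fun x _ => (key x).1 (by rw [h]; exact Algebra.mem_top)
  · exact eq_top_iff.mpr fun x _ => (key x).2 (by rw [h]; exact Algebra.mem_top)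

/-- Nakayama-style: a submodule of a finite module which is everywhere locally everything is
everything. -/
lemma nakayama_top {R A : Type*} [CommRing R] [AddCommGroup A] [Module R A] [Module.Finite R A]
    (N : Submodule R A) (h : ∀ m : Ideal R, m.IsMaximal → N ⊔ m • ⊤ = ⊤) : N = ⊤ := by
  by_contra hN
  have hQ : Nontrivial (A ⧸ N) :=
    Submodule.Quotient.nontrivial_iff.mpr hN
  have hann : Module.annihilator R (A ⧸ N) ≠ ⊤ := by
    intro h1
    obtain ⟨q, hq⟩ := exists_ne (0 : A ⧸ N)
    have : (1 : R) ∈ Module.annihilator R (A ⧸ N) := h1 ▸ trivial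
    exact hq (by simpa using Module.mem_annihilator.mp this q)
  obtain ⟨m, hm, hle⟩ := Ideal.exists_le_maximal _ hann
  -- push the hypothesis to the quotient
  have hmap : (⊤ : Submodule R (A ⧸ N)) ≤ m • ⊤ := by
    have := congrArg (Submodule.map N.mkQ) (h m hm)
    rw [Submodule.map_sup, Submodule.map_smul'', Submodule.map_top, Submodule.range_mkQ] at this
    have hbot : Submodule.map N.mkQ N = ⊥ := by
      refine eq_bot_iff.mpr (Submodule.map_le_iff_le_comap.mpr ?_)
      rw [Submodule.comap_bot, Submodule.ker_mkQ]
    rw [hbot, bot_sup_eq] at this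
    exact this.ge
  obtain ⟨r, hr1, hr2⟩ :=
    Submodule.exists_sub_one_mem_and_smul_eq_zero_of_fg_of_le_smul m ⊤ Module.Finite.fg_top hmap
  have hrann : r ∈ m := hle (Module.mem_annihilator.mpr fun q => hr2 q trivial)
  have : (1 : R) ∈ m := by simpa using m.sub_mem hrann hr1
  exact hm.ne_top (m.eq_top_iff_one.mpr this)

theorem stmt_5 {R A : Type*} [CommRing R] [Ring A] [Algebra R A] [Module.Finite R A]
    {k : ℕ} (a : Fin k → A) :
    Algebra.adjoin R (Set.range a) = ⊤ ↔
      ∀ (m : Ideal R), m.IsMaximal →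
        Algebra.adjoin (R ⧸ m)
          (Set.range fun i =>
            (Algebra.TensorProduct.includeRight (a i) : (R ⧸ m) ⊗[R] A)) = ⊤ := by
  have key : ∀ m : Ideal R, m.IsMaximal →
      (Algebra.adjoin (R ⧸ m)
          (Set.range fun i =>
            (Algebra.TensorProduct.includeRight (a i) : (R ⧸ m) ⊗[R] A)) = ⊤ ↔
        Subalgebra.toSubmodule (Algebra.adjoin R (Set.range a)) ⊔ m • ⊤ = ⊤) := by
    intro m hm
    rw [adjoin_quot_eq_top_iff]
    have h1 : (Set.range fun i => (Algebra.TensorProduct.includeRight (a i) : (R ⧸ m) ⊗[R] A)) =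
        (Algebra.TensorProduct.includeRight : A →ₐ[R] (R ⧸ m) ⊗[R] A) '' Set.range a := by
      rw [← Set.range_comp]; rfl
    rw [h1, ← AlgHom.map_adjoin, ← Algebra.toSubmodule_eq_top]
    have h2 : Subalgebra.toSubmodule
          ((Algebra.adjoin R (Set.range a)).map
            (Algebra.TensorProduct.includeRight : A →ₐ[R] (R ⧸ m) ⊗[R] A)) =
        Submodule.map (Algebra.TensorProduct.includeRight : A →ₐ[R] (R ⧸ m) ⊗[R] A).toLinearMap
          (Subalgebra.toSubmodule (Algebra.adjoin R (Set.range a))) := rfl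
    rw [h2]
    -- includeRight as a linear map equals φ.symm ∘ₗ mkQ
    have h3 : (Algebra.TensorProduct.includeRight : A →ₐ[R] (R ⧸ m) ⊗[R] A).toLinearMap =
        (TensorProduct.quotTensorEquivQuotSMul A m).symm.toLinearMap ∘ₗ
          (m • ⊤ : Submodule R A).mkQ := by
      ext x
      exact (TensorProduct.quotTensorEquivQuotSMul_symm_mk m x).symm
    have hiff : ∀ p : Submodule R (A ⧸ (m • ⊤ : Submodule R A)),
        Submodule.map (TensorProduct.quotTensorEquivQuotSMul A m).symm.toLinearMap p = ⊤ ↔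
          p = ⊤ := by
      intro p
      constructor
      · intro hp
        have hinj : Function.Injective
            ⇑(TensorProduct.quotTensorEquivQuotSMul A m).symm.toLinearMap :=
          (TensorProduct.quotTensorEquivQuotSMul A m).symm.injective
        have := congrArg
          (Submodule.comap (TensorProduct.quotTensorEquivQuotSMul A m).symm.toLinearMap) hp
        rwa [Submodule.comap_map_eq_of_injective hinj, Submodule.comap_top] at this
      · intro hp
        rw [hp, Submodule.map_top]
        exact LinearMap.range_eq_top.mpr
          (TensorProduct.quotTensorEquivQuotSMul A m).symm.surjective
    rw [h3, Submodule.map_comp,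
      hiff (Submodule.map (m • ⊤ : Submodule R A).mkQ
        (Subalgebra.toSubmodule (Algebra.adjoin R (Set.range a)))),
      Submodule.map_mkQ_eq_top, sup_comm]
  constructor
  · intro h m hm
    rw [key m hm, h]
    simp
  · intro h
    have := nakayama_top (Subalgebra.toSubmodule (Algebra.adjoin R (Set.range a)))
      (fun m hm => (key m hm).mp (h m hm))
    exact Algebra.toSubmodule_eq_top.mp this
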